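/- arXiv:2106.07302 — 2 statements merged into one kernel-verified Lean document; each statement's English description precedes it below -/
import Mathlib

section
/- Diffusion distance equals Euclidean distance in diffusion coordinates: for P = D⁻¹W with W symmetric positive and eigen-decomposition P v_k = λ_k v_k, u_k^T P = λ_k u_k^T (biorthogonal, with u_0 the stationary left eigenvector), the squared diffusion distance Dist_t²(i,j) = Σ_k [(P^t)_{ik} - (P^t)_{jk}]² / u_0(k) equals Σ_{k≥1} λ_k^{2t} (v_k(i) - v_k(j))². -/
theorem diffusion_distance_eq_euclidean_in_diffusion_coordinates
    (N : ℕ) [NeZero N] (W : Matrix (Fin N) (Fin N) ℝ)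
    (hWsymm : W.IsSymm) (hWpos : ∀ i j, 0 < W i j)
    (d : Fin N → ℝ) (hd : ∀ i, d i = ∑ j, W i j)
    (P S : Matrix (Fin N) (Fin N) ℝ)
    (hP : ∀ i j, P i j = W i j / d i)
    (hS : ∀ i j, S i j = W i j / (Real.sqrt (d i) * Real.sqrt (d j)))
    (w : Fin N → Fin N → ℝ) (lam : Fin N → ℝ)
    (horth : ∀ j k, ∑ i, w j i * w k i = if j = k then 1 else 0)
    (heig : ∀ k, S.mulVec (w k) = lam k • w k)
    (hlam0 : lam 0 = 1)
    (hsimple : ∀ k, k ≠ 0 → lam k ≠ 1)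
    (hw0 : ∀ i, w 0 i = Real.sqrt (d i) / Real.sqrt (∑ j, d j))
    (v u : Fin N → Fin N → ℝ)
    (hv : ∀ k i, v k i = Real.sqrt (∑ j, d j) * w k i / Real.sqrt (d i))
    (hu : ∀ k i, u k i = Real.sqrt (d i) * w k i / Real.sqrt (∑ j, d j))
    (t : ℕ) (ht : 0 < t) :
    ∀ i j, ∑ k, ((P ^ t) i k - (P ^ t) j k) ^ 2 / u 0 k =
      ∑ k ∈ Finset.univ \ {(0 : Fin N)}, lam k ^ (2 * t) * (v k i - v k j) ^ 2 := by
  intro i j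
  have hdpos : ∀ a, 0 < d a := fun a => by
    rw [hd]; exact Finset.sum_pos (fun b _ => hWpos a b) Finset.univ_nonempty
  have hDpos : 0 < ∑ b, d b := Finset.sum_pos (fun b _ => hdpos b) Finset.univ_nonempty
  have hsd : ∀ a, 0 < Real.sqrt (d a) := fun a => Real.sqrt_pos.2 (hdpos a)
  have hsdsq : ∀ a, Real.sqrt (d a) * Real.sqrt (d a) = d a := fun a =>
    Real.mul_self_sqrt (hdpos a).le
  have hsD : 0 < Real.sqrt (∑ b, d b) := Real.sqrt_pos.2 hDpos
  have hsDsq : Real.sqrt (∑ b, d b) * Real.sqrt (∑ b, d b) = ∑ b, d b :=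
    Real.mul_self_sqrt hDpos.le
  -- completeness: rows of w are orthonormal, hence columns too
  have hcomp : ∀ a b, ∑ m, w m a * w m b = if a = b then 1 else 0 := by
    set M : Matrix (Fin N) (Fin N) ℝ := Matrix.of w with hM
    have h1 : M * M.transpose = 1 := by
      ext a b
      simp [Matrix.mul_apply, Matrix.one_apply, hM, horth a b]
    have h2 : M.transpose * M = 1 := mul_eq_one_comm.mp h1
    intro a b
    have h3 : (M.transpose * M) a b = (1 : Matrix (Fin N) (Fin N) ℝ) a b := by rw [h2]
    simpa [Matrix.mul_apply, Matrix.one_apply, hM] using h3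
  -- S is symmetric
  have hSsymm : ∀ a b, S a b = S b a := by
    intro a b
    rw [hS, hS, hWsymm.apply a b]
    ring
  -- pointwise eigen equation
  have hSeig : ∀ k a, ∑ l, S a l * w k l = lam k * w k a := by
    intro k a
    have := congrFun (heig k) a
    simpa [Matrix.mulVec, dotProduct] using this
  -- entries of S ^ n
  have hSt : ∀ (n : ℕ) a b, (S ^ n) a b = ∑ m, lam m ^ n * (w m a * w m b) := by
    intro n
    induction n with
    | zero =>
      intro a b
      simp only [pow_zero, one_mul, hcomp a b]
      simp [Matrix.one_apply, eq_comm]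
    | succ n ih =>
      intro a b
      rw [pow_succ, Matrix.mul_apply]
      calc ∑ l, (S ^ n) a l * S l b
          = ∑ l, ∑ m, lam m ^ n * (w m a * (S b l * w m l)) := by
            refine Finset.sum_congr rfl fun l _ => ?_
            rw [ih a l, Finset.sum_mul]
            refine Finset.sum_congr rfl fun m _ => ?_
            rw [hSsymm l b]; ring
        _ = ∑ m, lam m ^ n * (w m a * ∑ l, S b l * w m l) := by
            rw [Finset.sum_comm]
            refine Finset.sum_congr rfl fun m _ => ?_
            rw [Finset.mul_sum, Finset.mul_sum]
        _ = ∑ m, lam m ^ (n + 1) * (w m a * w m b) := by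
            refine Finset.sum_congr rfl fun m _ => ?_
            rw [hSeig m b, pow_succ]; ring
  -- relation between P and S
  have hPS : ∀ a b, P a b = Real.sqrt (d b) / Real.sqrt (d a) * S a b := by
    intro a b
    rw [hP, hS, div_mul_div_comm,
      div_eq_div_iff (hdpos a).ne' (mul_pos (hsd a) (mul_pos (hsd a) (hsd b))).ne']
    calc W a b * (Real.sqrt (d a) * (Real.sqrt (d a) * Real.sqrt (d b)))
        = Real.sqrt (d b) * W a b * (Real.sqrt (d a) * Real.sqrt (d a)) := by ring
      _ = Real.sqrt (d b) * W a b * d a := by rw [hsdsq a]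
  -- entries of P ^ n
  have hPt : ∀ (n : ℕ) a b, (P ^ n) a b = Real.sqrt (d b) / Real.sqrt (d a) * (S ^ n) a b := by
    intro n
    induction n with
    | zero =>
      intro a b
      by_cases h : a = b
      · subst h
        simp [Matrix.one_apply, div_self (hsd a).ne']
      · simp [Matrix.one_apply, h]
    | succ n ih =>
      intro a b
      rw [pow_succ, pow_succ, Matrix.mul_apply, Matrix.mul_apply, Finset.mul_sum]
      refine Finset.sum_congr rfl fun l _ => ?_
      rw [ih a l, hPS l b]
      field_simp [(hsd a).ne', (hsd l).ne']
  -- u 0 is the stationary distribution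
  have hu0 : ∀ k, u 0 k = d k / (∑ b, d b) := by
    intro k
    rw [hu, hw0, mul_div_assoc', div_div, hsdsq, hsDsq]
  set a : Fin N → ℝ := fun m =>
    lam m ^ t * (w m i / Real.sqrt (d i) - w m j / Real.sqrt (d j)) with ha
  -- key pointwise identity for each k
  have hterm : ∀ k, ((P ^ t) i k - (P ^ t) j k) ^ 2 / u 0 k =
      (∑ b, d b) * (∑ m, a m * w m k) ^ 2 := by
    intro k
    have hdiff : (P ^ t) i k - (P ^ t) j k = Real.sqrt (d k) * (∑ m, a m * w m k) := by
      rw [hPt t i k, hPt t j k, hSt t i k, hSt t j k, Finset.mul_sum, Finset.mul_sum,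
        Finset.mul_sum, ← Finset.sum_sub_distrib]
      refine Finset.sum_congr rfl fun m _ => ?_
      simp only [ha]
      field_simp
    rw [hdiff, hu0 k, mul_pow, Real.sq_sqrt (hdpos k).le]
    field_simp [(hdpos k).ne']
  -- orthonormal expansion of the square
  have hexp : ∑ k, (∑ m, a m * w m k) ^ 2 = ∑ m, a m ^ 2 := by
    calc ∑ k, (∑ m, a m * w m k) ^ 2
        = ∑ k, ∑ m, ∑ n, (a m * a n) * (w m k * w n k) := by
          refine Finset.sum_congr rfl fun k _ => ?_
          rw [sq, Finset.sum_mul_sum]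
          exact Finset.sum_congr rfl fun m _ => Finset.sum_congr rfl fun n _ => by ring
      _ = ∑ m, ∑ n, (a m * a n) * (∑ k, w m k * w n k) := by
          rw [Finset.sum_comm]
          refine Finset.sum_congr rfl fun m _ => ?_
          rw [Finset.sum_comm]
          exact Finset.sum_congr rfl fun n _ => by rw [Finset.mul_sum]
      _ = ∑ m, a m ^ 2 := by
          refine Finset.sum_congr rfl fun m _ => ?_
          rw [Finset.sum_eq_single m]
          · rw [horth m m, if_pos rfl, mul_one, sq]
          · intro n _ hn
            rw [horth m n, if_neg fun h => hn h.symm, mul_zero]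
          · intro h; exact absurd (Finset.mem_univ m) h
  -- each term matches the diffusion coordinates
  have hvdiff : ∀ m, (∑ b, d b) * a m ^ 2 = lam m ^ (2 * t) * (v m i - v m j) ^ 2 := by
    intro m
    have hvv : v m i - v m j = Real.sqrt (∑ b, d b) *
        (w m i / Real.sqrt (d i) - w m j / Real.sqrt (d j)) := by
      rw [hv m i, hv m j, mul_sub, mul_div_assoc, mul_div_assoc]
    rw [hvv, ha]
    simp only [mul_pow]
    rw [Real.sq_sqrt hDpos.le, mul_comm 2 t, pow_mul]
    ring
  calc ∑ k, ((P ^ t) i k - (P ^ t) j k) ^ 2 / u 0 k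
      = ∑ k, (∑ b, d b) * (∑ m, a m * w m k) ^ 2 :=
        Finset.sum_congr rfl fun k _ => hterm k
    _ = (∑ b, d b) * ∑ k, (∑ m, a m * w m k) ^ 2 := (Finset.mul_sum _ _ _).symm
    _ = ∑ m, (∑ b, d b) * a m ^ 2 := by rw [hexp, Finset.mul_sum]
    _ = ∑ m, lam m ^ (2 * t) * (v m i - v m j) ^ 2 :=
        Finset.sum_congr rfl fun m _ => hvdiff m
    _ = ∑ k ∈ Finset.univ \ {(0 : Fin N)}, lam k ^ (2 * t) * (v k i - v k j) ^ 2 := by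
        have h0 : v 0 i - v 0 j = 0 := by
          have e : ∀ a : Fin N, Real.sqrt (∑ b, d b) *
              (Real.sqrt (d a) / Real.sqrt (∑ b, d b)) / Real.sqrt (d a) = 1 := by
            intro a
            rw [mul_div_assoc', mul_comm, mul_div_assoc, div_self hsD.ne', mul_one,
              div_self (hsd a).ne']
          rw [hv 0 i, hv 0 j, hw0 i, hw0 j, e i, e j, sub_self]
        rw [Finset.sdiff_singleton_eq_erase]
        rw [← Finset.add_sum_erase _ _ (Finset.mem_univ (0 : Fin N))]
        rw [h0]
        ring
end

section
/- The multiplication embedding identity: for matrices A₁, A₂ and the unitary U = diag(√(-i)·I, I, √(i)·I) on ℂ³ ⊗ ℂ^N, one has X₃(A₁A₂) = i·U [X₁(A₁), X₂(A₂)] U†, where X₁(A) = |0⟩⟨1| ⊗ A + |1⟩⟨0| ⊗ A† and X₂(A) = |1⟩⟨2| ⊗ A + |2⟩⟨1| ⊗ A†. -/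
open Matrix Kronecker

theorem multiplication_embedding_commutator_identity
    (N : ℕ) (A₁ A₂ : Matrix (Fin N) (Fin N) ℂ)
    (R₁ R₂ R₃ : Matrix (Fin 3) (Fin 3) ℂ)
    (hR₁ : R₁ = Matrix.single 0 1 1)
    (hR₂ : R₂ = Matrix.single 1 2 1)
    (hR₃ : R₃ = Matrix.single 0 2 1)
    (X₁ X₂ X₃ : Matrix (Fin N) (Fin N) ℂ → Matrix (Fin 3 × Fin N) (Fin 3 × Fin N) ℂ)
    (hX₁ : ∀ A, X₁ A = R₁ ⊗ₖ A + R₁ᴴ ⊗ₖ Aᴴ)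
    (hX₂ : ∀ A, X₂ A = R₂ ⊗ₖ A + R₂ᴴ ⊗ₖ Aᴴ)
    (hX₃ : ∀ A, X₃ A = R₃ ⊗ₖ A + R₃ᴴ ⊗ₖ Aᴴ)
    (U : Matrix (Fin 3 × Fin N) (Fin 3 × Fin N) ℂ)
    (hU : U = (Matrix.diagonal
        ![Complex.exp (-(Real.pi / 4) * Complex.I), 1,
          Complex.exp ((Real.pi / 4) * Complex.I)]) ⊗ₖ (1 : Matrix (Fin N) (Fin N) ℂ)) :
    X₃ (A₁ * A₂) =
      Complex.I • (U * (X₁ A₁ * X₂ A₂ - X₂ A₂ * X₁ A₁) * Uᴴ) := by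
  set s := Complex.exp (-(Real.pi / 4) * Complex.I) with hs
  set t := Complex.exp ((Real.pi / 4) * Complex.I) with ht
  have hss : s * s = -Complex.I := by
    rw [hs, ← Complex.exp_add]
    have : (-(Real.pi/4) * Complex.I) + (-(Real.pi/4) * Complex.I)
        = (↑(-(Real.pi/2)) : ℂ) * Complex.I := by push_cast; ring
    rw [this, Complex.exp_mul_I, ← Complex.ofReal_cos, ← Complex.ofReal_sin,
      Real.cos_neg, Real.sin_neg, Real.cos_pi_div_two, Real.sin_pi_div_two]
    simp
  have htt : t * t = Complex.I := by
    rw [ht, ← Complex.exp_add]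
    have : ((Real.pi/4) * Complex.I) + ((Real.pi/4) * Complex.I)
        = (↑(Real.pi/2) : ℂ) * Complex.I := by push_cast; ring
    rw [this, Complex.exp_mul_I, ← Complex.ofReal_cos, ← Complex.ofReal_sin,
      Real.cos_pi_div_two, Real.sin_pi_div_two]
    simp
  have hstar_s : (starRingEnd ℂ) s = t := by
    rw [hs, ht, ← Complex.exp_conj]
    congr 1
    simp [_root_.map_mul, map_div₀, Complex.conj_ofReal, map_ofNat]
  have hstar_t : (starRingEnd ℂ) t = s := by
    rw [hs, ht, ← Complex.exp_conj]
    congr 1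
    simp [_root_.map_mul, map_div₀, Complex.conj_ofReal, map_ofNat]
  set D : Matrix (Fin 3) (Fin 3) ℂ := Matrix.diagonal ![s, 1, t] with hD
  -- Fin 3 product facts
  have h12 : R₁ * R₂ = R₃ := by
    rw [hR₁, hR₂, hR₃]
    ext i j
    fin_cases i <;> fin_cases j <;>
      simp [Matrix.mul_apply, Fin.sum_univ_three, Matrix.single]
  have h12' : R₁ * R₂ᴴ = 0 := by
    rw [hR₁, hR₂]
    ext i j
    fin_cases i <;> fin_cases j <;>
      simp [Matrix.mul_apply, Fin.sum_univ_three, Matrix.single,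
        Matrix.conjTranspose_apply]
  have h1'2 : R₁ᴴ * R₂ = 0 := by
    rw [hR₁, hR₂]
    ext i j
    fin_cases i <;> fin_cases j <;>
      simp [Matrix.mul_apply, Fin.sum_univ_three, Matrix.single,
        Matrix.conjTranspose_apply]
  have h1'2' : R₁ᴴ * R₂ᴴ = 0 := by
    rw [hR₁, hR₂]
    ext i j
    fin_cases i <;> fin_cases j <;>
      simp [Matrix.mul_apply, Fin.sum_univ_three, Matrix.single,
        Matrix.conjTranspose_apply]
  have h21 : R₂ * R₁ = 0 := by
    rw [hR₁, hR₂]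
    ext i j
    fin_cases i <;> fin_cases j <;>
      simp [Matrix.mul_apply, Fin.sum_univ_three, Matrix.single]
  have h21' : R₂ * R₁ᴴ = 0 := by
    rw [hR₁, hR₂]
    ext i j
    fin_cases i <;> fin_cases j <;>
      simp [Matrix.mul_apply, Fin.sum_univ_three, Matrix.single,
        Matrix.conjTranspose_apply]
  have h2'1 : R₂ᴴ * R₁ = 0 := by
    rw [hR₁, hR₂]
    ext i j
    fin_cases i <;> fin_cases j <;>
      simp [Matrix.mul_apply, Fin.sum_univ_three, Matrix.single,
        Matrix.conjTranspose_apply]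
  have h2'1' : R₂ᴴ * R₁ᴴ = R₃ᴴ := by
    rw [hR₁, hR₂, hR₃]
    ext i j
    fin_cases i <;> fin_cases j <;>
      simp [Matrix.mul_apply, Fin.sum_univ_three, Matrix.single,
        Matrix.conjTranspose_apply]
  have hDRD : D * R₃ * Dᴴ = (-Complex.I) • R₃ := by
    rw [hR₃]
    ext i j
    fin_cases i <;> fin_cases j <;>
      simp [hD, Matrix.mul_apply, Fin.sum_univ_three, Matrix.single,
        Matrix.conjTranspose_apply, Matrix.diagonal, hstar_s, hstar_t, hss, htt]
  have hDRD' : D * R₃ᴴ * Dᴴ = Complex.I • R₃ᴴ := by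
    rw [hR₃]
    ext i j
    fin_cases i <;> fin_cases j <;>
      simp [hD, Matrix.mul_apply, Fin.sum_univ_three, Matrix.single,
        Matrix.conjTranspose_apply, Matrix.diagonal, hstar_s, hstar_t, hss, htt]
  have hUH : (D ⊗ₖ (1 : Matrix (Fin N) (Fin N) ℂ))ᴴ
      = Dᴴ ⊗ₖ (1 : Matrix (Fin N) (Fin N) ℂ) := by
    ext ⟨i, a⟩ ⟨j, b⟩
    simp [Matrix.conjTranspose_apply, Matrix.kroneckerMap_apply, Matrix.one_apply,
      apply_ite (starRingEnd ℂ), eq_comm]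
  have hcomm : X₁ A₁ * X₂ A₂ - X₂ A₂ * X₁ A₁
      = R₃ ⊗ₖ (A₁ * A₂) - R₃ᴴ ⊗ₖ (A₁ * A₂)ᴴ := by
    rw [hX₁, hX₂]
    simp only [add_mul, mul_add, ← Matrix.mul_kronecker_mul,
      h12, h12', h1'2, h1'2', h21, h21', h2'1, h2'1',
      Matrix.zero_kronecker, Matrix.conjTranspose_mul]
    abel
  rw [hX₃, hcomm, hU, hUH, Matrix.mul_sub, Matrix.sub_mul,
    ← Matrix.mul_kronecker_mul, ← Matrix.mul_kronecker_mul,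
    ← Matrix.mul_kronecker_mul, ← Matrix.mul_kronecker_mul,
    one_mul, mul_one, one_mul, mul_one, hDRD, hDRD',
    Matrix.smul_kronecker, Matrix.smul_kronecker, smul_sub, smul_smul, smul_smul]
  simp [Complex.I_mul_I]
end
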